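/- Under the hypotheses of the previous statement, the number of pairs (n₁, n₂) with N/2 < n₁ < n₂ ≤ 2N for which some integer m ∈ (M, 2M] satisfies x < m·n₁, m·n₂ ≤ x+y is at most C·x·y/M² for an absolute constant C, provided M·N ≍ x (say x/2 ≤ M·N ≤ 2x). -/
import Mathlib


/-- The number of pairs `(n₁, n₂)` with `N/2 < n₁ < n₂ ≤ 2N` for which some integer
`m ∈ (M, 2M]` satisfies `x < m·n₁, m·n₂ ≤ x+y` is at most `C·x·y/M²` for an absolute
constant `C`, provided `x/2 ≤ M·N ≤ 2x`, `0 < y ≤ x` and `2x ≤ y·N`. -/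
theorem stmt13 :
    ∃ C > (0 : ℝ), ∀ x y M N : ℝ, 0 < y → y ≤ x → 0 < M → 0 < N →
      x / 2 ≤ M * N → M * N ≤ 2 * x → 2 * x ≤ y * N →
      (({p : ℕ × ℕ | N / 2 < (p.1 : ℝ) ∧ p.1 < p.2 ∧ (p.2 : ℝ) ≤ 2 * N ∧
          ∃ m : ℕ, M < (m : ℝ) ∧ (m : ℝ) ≤ 2 * M ∧
            x < (m : ℝ) * p.1 ∧ (m : ℝ) * p.1 ≤ x + y ∧
            x < (m : ℝ) * p.2 ∧ (m : ℝ) * p.2 ≤ x + y}.ncard : ℝ)) ≤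
        C * x * y / M ^ 2 := by
  refine ⟨4, by norm_num, ?_⟩
  intro x y M N hy hyx hM hN h1 h2 h3
  set a := ⌊2 * N⌋₊ with ha_def
  set b := ⌊y / M⌋₊ with hb_def
  set T : Set (ℕ × ℕ) := ↑(Finset.Icc 1 a ×ˢ Finset.Icc 1 b) with hT_def
  have hTfin : T.Finite := (Finset.Icc 1 a ×ˢ Finset.Icc 1 b).finite_toSet
  set S : Set (ℕ × ℕ) := {p : ℕ × ℕ | N / 2 < (p.1 : ℝ) ∧ p.1 < p.2 ∧ (p.2 : ℝ) ≤ 2 * N ∧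
          ∃ m : ℕ, M < (m : ℝ) ∧ (m : ℝ) ≤ 2 * M ∧
            x < (m : ℝ) * p.1 ∧ (m : ℝ) * p.1 ≤ x + y ∧
            x < (m : ℝ) * p.2 ∧ (m : ℝ) * p.2 ≤ x + y} with hS_def
  have hsub : S ⊆ (fun q : ℕ × ℕ => (q.1, q.1 + q.2)) '' T := by
    rintro ⟨n1, n2⟩ ⟨hn1, hlt, hn2, m, hm1, hm2, hx1, hx2, hx3, hx4⟩
    refine ⟨(n1, n2 - n1), ?_, ?_⟩
    · have hm0 : (0 : ℝ) < m := lt_trans hM hm1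
      have hcast : ((n2 - n1 : ℕ) : ℝ) = (n2 : ℝ) - n1 := by
        push_cast [Nat.cast_sub hlt.le]; ring
      have hdM : ((n2 - n1 : ℕ) : ℝ) ≤ y / M := by
        rw [le_div_iff₀ hM, hcast]
        have hd1 : (n1 : ℝ) + 1 ≤ n2 := by exact_mod_cast hlt
        nlinarith
      have hn1pos : 1 ≤ n1 := by
        rcases Nat.eq_zero_or_pos n1 with h | h
        · exfalso; rw [h] at hn1; simp at hn1; linarith
        · exact h
      simp only [hT_def, Finset.coe_product, Set.mem_prod, Finset.mem_coe, Finset.mem_Icc]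
      exact ⟨⟨hn1pos, Nat.le_floor (by linarith)⟩, ⟨by omega, Nat.le_floor hdM⟩⟩
    · have h : n1 + (n2 - n1) = n2 := by omega
      simp [h]
  have hcard : S.ncard ≤ a * b := by
    calc S.ncard ≤ ((fun q : ℕ × ℕ => (q.1, q.1 + q.2)) '' T).ncard :=
          Set.ncard_le_ncard hsub (hTfin.image _)
      _ ≤ T.ncard := Set.ncard_image_le hTfin
      _ = a * b := by
          rw [hT_def, Set.ncard_coe_finset, Finset.card_product, Nat.card_Icc, Nat.card_Icc]
          simp
  have ha : (a : ℝ) ≤ 2 * N := Nat.floor_le (by positivity)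
  have hb : (b : ℝ) ≤ y / M := Nat.floor_le (by positivity)
  calc (S.ncard : ℝ) ≤ ((a * b : ℕ) : ℝ) := by exact_mod_cast hcard
    _ = (a : ℝ) * (b : ℝ) := by push_cast; ring
    _ ≤ (2 * N) * (y / M) := mul_le_mul ha hb (by positivity) (by positivity)
    _ ≤ 4 * x * y / M ^ 2 := by
        rw [show (2 * N) * (y / M) = 2 * N * y / M by ring,
          div_le_div_iff₀ hM (by positivity)]
        nlinarith [mul_le_mul_of_nonneg_right h2 (mul_pos hy hM).le]
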